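/- Let T be a J-noncontraction on the Krein space H, let D := (T*JT − J)^{1/2} (the positive square root), and define V on Ĥ = ⨁_{n≥1} H by V(x₁ ⊕ x₂ ⊕ x₃ ⊕ ⋯) := Tx₁ ⊕ Dx₁ ⊕ x₂ ⊕ x₃ ⊕ ⋯. Then V is a bounded Ĵ-isometry on (Ĥ, Ĵ) (where Ĵ = J ⊕ (−I) ⊕ (−I) ⊕ ⋯), and T ∘ p = p ∘ V where p is the projection onto the first coordinate. -/

import Mathlib

/-- for a J-noncontraction `T` with `D = (T*JT - J)^{1/2}` (the positive
square root), the operator `V(x₁ ⊕ x₂ ⊕ ⋯) = Tx₁ ⊕ Dx₁ ⊕ x₂ ⊕ ⋯` on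
`Ĥ = ⨁_{n≥1} H` is a bounded Ĵ-isometry, and `T ∘ p = p ∘ V`. -/
theorem dilation_is_isometry {H : Type*} [NormedAddCommGroup H]
    [InnerProductSpace ℂ H] [CompleteSpace H]
    (J T : H →L[ℂ] H) (hJ : IsSelfAdjoint J) (hJ2 : J ∘L J = 1)
    (hT : (ContinuousLinearMap.adjoint T ∘L J ∘L T - J).IsPositive)
    (D : H →L[ℂ] H) (hD : D.IsPositive)
    (hDsq : D ∘L D = ContinuousLinearMap.adjoint T ∘L J ∘L T - J)
    (Jhat : lp (fun _ : ℕ => H) 2 →L[ℂ] lp (fun _ : ℕ => H) 2)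
    (hJhat0 : ∀ f : lp (fun _ : ℕ => H) 2, (Jhat f) 0 = J (f 0))
    (hJhatn : ∀ (f : lp (fun _ : ℕ => H) 2) (n : ℕ), n ≠ 0 → (Jhat f) n = -(f n))
    (p : lp (fun _ : ℕ => H) 2 →L[ℂ] H)
    (hp : ∀ f : lp (fun _ : ℕ => H) 2, p f = f 0)
    (V : lp (fun _ : ℕ => H) 2 →L[ℂ] lp (fun _ : ℕ => H) 2)
    (hV0 : ∀ f : lp (fun _ : ℕ => H) 2, (V f) 0 = T (f 0))
    (hV1 : ∀ f : lp (fun _ : ℕ => H) 2, (V f) 1 = D (f 0))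
    (hVn : ∀ (f : lp (fun _ : ℕ => H) 2) (n : ℕ), (V f) (n + 2) = f (n + 1)) :
    (∀ f : lp (fun _ : ℕ => H) 2,
        (inner ℂ (V f) (Jhat (V f)) : ℂ) = inner ℂ f (Jhat f)) ∧
    (∀ f : lp (fun _ : ℕ => H) 2, T (p f) = p (V f)) := by
  constructor
  · intro f
    have key : ∀ x : H, (inner ℂ (T x) (J (T x)) : ℂ) - inner ℂ (D x) (D x) = inner ℂ x (J x) := by
      intro x
      have h1 : (inner ℂ (T x) (J (T x)) : ℂ) = inner ℂ x ((ContinuousLinearMap.adjoint T ∘L J ∘L T) x) := by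
        simp [ContinuousLinearMap.adjoint_inner_right]
      have hDa : ContinuousLinearMap.adjoint D = D := by
        rw [← ContinuousLinearMap.star_eq_adjoint]; exact hD.isSelfAdjoint
      have h2 : (inner ℂ (D x) (D x) : ℂ) = inner ℂ x ((D ∘L D) x) := by
        calc (inner ℂ (D x) (D x) : ℂ) = inner ℂ x (ContinuousLinearMap.adjoint D (D x)) :=
              (ContinuousLinearMap.adjoint_inner_right D x (D x)).symm
          _ = inner ℂ x ((D ∘L D) x) := by rw [hDa]; rfl
      rw [h1, h2, hDsq]
      simp [inner_sub_right]
    rw [lp.inner_eq_tsum, lp.inner_eq_tsum]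
    have hs1 : Summable fun n => (inner ℂ ((V f) n) ((Jhat (V f)) n) : ℂ) :=
      lp.summable_inner _ _
    have hs2 : Summable fun n => (inner ℂ (f n) ((Jhat f) n) : ℂ) :=
      lp.summable_inner _ _
    rw [Summable.tsum_eq_zero_add hs1, Summable.tsum_eq_zero_add ((summable_nat_add_iff 1).2 hs1),
        Summable.tsum_eq_zero_add hs2]
    have he : ∀ n : ℕ, (inner ℂ ((V f) (n + 1 + 1)) ((Jhat (V f)) (n + 1 + 1)) : ℂ)
        = inner ℂ (f (n + 1)) ((Jhat f) (n + 1)) := by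
      intro n
      rw [hJhatn _ _ (by omega), hJhatn _ _ (by omega)]
      rw [show n + 1 + 1 = n + 2 from rfl, hVn]
    rw [tsum_congr he]
    have h0 : (inner ℂ ((V f) 0) ((Jhat (V f)) 0) : ℂ) = inner ℂ (T (f 0)) (J (T (f 0))) := by
      rw [hJhat0, hV0]
    have h1 : (inner ℂ ((V f) (0 + 1)) ((Jhat (V f)) (0 + 1)) : ℂ)
        = -inner ℂ (D (f 0)) (D (f 0)) := by
      rw [hJhatn _ _ (by omega), hV1, inner_neg_right]
    rw [h0, h1, hJhat0]
    have := key (f 0)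
    ring_nf
    linear_combination this
  · intro f
    rw [hp, hp, hV0]
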